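/- Let N ≥ 2 be even. The set of tuples (T_v)_v ∈ (ℂ² ⊗ (ℂ²)^{⊗4})^{2N} for which the row flattening of the torus contraction ψ((T_v)_v) ∈ (ℂ²)^{⊗2N} — namely the S-flattening where S consists of the physical factors at the N top-row vertices — has full rank 2^N is open and dense (in the Euclidean topology) in the parameter space (ℂ² ⊗ (ℂ²)^{⊗4})^{2N}. -/

import Mathlib

open scoped BigOperators

/-- The contraction map `ψ` of the `2 × N` grid on the torus.  Vertices are pairs
`(r, c) : Fin 2 × Fin N` (`r` the row, `c` the column); each vertex `v` carries a tensor
`T v ∈ ℂ² ⊗ (ℂ²)^{⊗4}` given in coordinates as `T v b u x d l` where `b` is the physical index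
and `u, x, d, l` are the indices of the upper, right, lower and left edges at `v`.
For each column `c` there are two vertical entanglement edges joining `(0,c)` and `(1,c)`:
edge `U c` is the upper edge of `(0,c)` and the lower edge of `(1,c)`, and edge `D c` is the
lower edge of `(0,c)` and the upper edge of `(1,c)`.  For each vertex `(r,c)` the horizontal
entanglement edge `H (r,c)` is the right edge of `(r,c)` and the left edge of `(r, c+1 mod N)`.
The coordinate of `psi N hN T` at a physical multi-index `b` is the sum over all assignments of
an index in `{1,2}` to every entanglement edge of the product over the vertices of the
corresponding coordinates of the `T v`. -/
noncomputable def psi (N : ℕ) (hN : 2 ≤ N)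
    (T : Fin 2 × Fin N → (Fin 2 → Fin 2 → Fin 2 → Fin 2 → Fin 2 → ℂ)) :
    (Fin 2 × Fin N → Fin 2) → ℂ := fun b =>
  ∑ U : Fin N → Fin 2, ∑ D : Fin N → Fin 2, ∑ H : Fin 2 × Fin N → Fin 2,
    ∏ v : Fin 2 × Fin N,
      T v (b v) (if v.1 = 0 then U v.2 else D v.2) (H v)
        (if v.1 = 0 then D v.2 else U v.2) (H (v.1, v.2 - ⟨1, by omega⟩))

/-- The torus contraction `φ(T)` obtained by placing the single tensor `T ∈ ℂ² ⊗ (ℂ²)^{⊗4}` at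
every vertex of the `2 × N` grid on the torus. -/
noncomputable def phi (N : ℕ) (hN : 2 ≤ N)
    (T : Fin 2 → Fin 2 → Fin 2 → Fin 2 → Fin 2 → ℂ) : (Fin 2 × Fin N → Fin 2) → ℂ :=
  psi N hN (fun _ => T)

/-- The `S`-flattening of a tensor `t ∈ (ℂ²)^{⊗2N}` (tensor factors indexed by the vertices of
the `2 × N` torus grid, `t` written in coordinates in the standard basis), as a matrix whose
columns are indexed by the multi-indices of the factors in `S` and whose rows are indexed by the
multi-indices of the remaining factors; thus `(flat N S t).mulVecLin` is exactly the flattening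
map `(⊗_{v∈S} ℂ²)^* → ⊗_{v∉S} ℂ²` in coordinates, and its rank is `(flat N S t).rank`. -/
noncomputable def flat (N : ℕ) (S : Finset (Fin 2 × Fin N))
    (t : (Fin 2 × Fin N → Fin 2) → ℂ) :
    Matrix ({v : Fin 2 × Fin N // v ∉ S} → Fin 2) ({v : Fin 2 × Fin N // v ∈ S} → Fin 2) ℂ :=
  Matrix.of fun b a => t fun v => if h : v ∈ S then a ⟨v, h⟩ else b ⟨v, h⟩

/-- `cpRankLE t r` says the tensor `t ∈ (ℂ²)^{⊗2N}` (factors indexed by the torus grid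
vertices, coordinates in the standard basis) is a sum of `r` rank-one (pure) tensors. -/
def cpRankLE {N : ℕ} (t : (Fin 2 × Fin N → Fin 2) → ℂ) (r : ℕ) : Prop :=
  ∃ w : Fin r → (Fin 2 × Fin N) → Fin 2 → ℂ,
    t = fun x => ∑ j : Fin r, ∏ v : Fin 2 × Fin N, w j v (x v)


section Aux

set_option synthInstance.maxSize 4000

lemma my_rank_reindex {m n k l : Type*} [Fintype m] [Fintype n] [Fintype k] [Fintype l]
    (e₁ : m ≃ k) (e₂ : n ≃ l) (A : Matrix m n ℂ) :
    (Matrix.reindex e₁ e₂ A).rank = A.rank := by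
  rw [Matrix.rank, Matrix.rank, Matrix.mulVecLin_reindex, LinearMap.range_comp,
    LinearMap.range_comp, LinearEquiv.range, Submodule.map_top, LinearEquiv.finrank_map_eq]

lemma my_rank_submatrix {m n k l : Type*} [Fintype m] [Fintype n] [Fintype k] [Fintype l]
    (e₁ : k ≃ m) (e₂ : l ≃ n) (A : Matrix m n ℂ) :
    (A.submatrix e₁ e₂).rank = A.rank := by
  have := my_rank_reindex e₁.symm e₂.symm A
  simpa [Matrix.reindex_apply] using this

lemma my_rank_eq_card_iff {μ : Type*} [Fintype μ] [DecidableEq μ] (Q : Matrix μ μ ℂ) :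
    Q.rank = Fintype.card μ ↔ Q.det ≠ 0 := by
  constructor
  · intro h hdet
    obtain ⟨v, hv, hQv⟩ := Matrix.exists_mulVec_eq_zero_iff.mpr hdet
    have hrange : LinearMap.range Q.mulVecLin = ⊤ := by
      apply Submodule.eq_top_of_finrank_eq
      rw [← Matrix.rank, h, Module.finrank_fintype_fun_eq_card]
    have hinj : Function.Injective Q.mulVecLin :=
      (LinearMap.injective_iff_surjective).mpr (LinearMap.range_eq_top.mp hrange)
    exact hv (hinj (show Q.mulVecLin v = Q.mulVecLin 0 by
      simpa [Matrix.mulVecLin_apply] using hQv))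
  · intro hdet
    exact Q.rank_of_isUnit ((Matrix.isUnit_iff_isUnit_det Q).mpr (isUnit_iff_ne_zero.mpr hdet))

lemma my_diff_prod {ι E : Type*} [NormedAddCommGroup E] [NormedSpace ℂ E]
    (u : Finset ι) (f : ι → E → ℂ) (h : ∀ i ∈ u, Differentiable ℂ (f i)) :
    Differentiable ℂ (fun x => ∏ i ∈ u, f i x) := by
  classical
  induction u using Finset.induction with
  | empty => simpa using differentiable_const (1 : ℂ)
  | insert _ _ hi ih =>
    rename_i a s
    simp only [Finset.prod_insert hi]
    exact (h a (Finset.mem_insert_self a s)).mul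
      (ih fun i hi' => h i (Finset.mem_insert_of_mem hi'))

lemma my_diff_eval {N : ℕ} (v : Fin 2 × Fin N) (a b c d e : Fin 2) :
    Differentiable ℂ
      (fun T : Fin 2 × Fin N → (Fin 2 → Fin 2 → Fin 2 → Fin 2 → Fin 2 → ℂ) =>
        T v a b c d e) := by
  let L : (Fin 2 × Fin N → (Fin 2 → Fin 2 → Fin 2 → Fin 2 → Fin 2 → ℂ)) →ₗ[ℂ] ℂ :=
    (LinearMap.proj e) ∘ₗ (LinearMap.proj d) ∘ₗ (LinearMap.proj c) ∘ₗ (LinearMap.proj b) ∘ₗ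
      (LinearMap.proj a) ∘ₗ (LinearMap.proj v)
  exact (LinearMap.toContinuousLinearMap L).differentiable

lemma my_diff_psi {N : ℕ} (hN : 2 ≤ N) (x : Fin 2 × Fin N → Fin 2) :
    Differentiable ℂ
      (fun T : Fin 2 × Fin N → (Fin 2 → Fin 2 → Fin 2 → Fin 2 → Fin 2 → ℂ) =>
        psi N hN T x) := by
  simp only [psi]
  apply Differentiable.fun_sum; intro U _
  apply Differentiable.fun_sum; intro D _
  apply Differentiable.fun_sum; intro H _
  exact my_diff_prod _ _ fun v _ => my_diff_eval v _ _ _ _ _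

def T0 : Fin 2 → Fin 2 → Fin 2 → Fin 2 → Fin 2 → ℂ := fun b u _ d _ =>
  (if u = b then 1 else 0) * (if d = b then 1 else 0)

lemma my_psi_T0 {N : ℕ} (hN : 2 ≤ N) (b : Fin 2 × Fin N → Fin 2) :
    psi N hN (fun _ => T0) b =
      (Fintype.card (Fin 2 × Fin N → Fin 2) : ℂ) *
        ∏ c : Fin N, (if b (0, c) = b (1, c) then 1 else 0) := by
  have h10 : (1 : Fin 2) ≠ 0 := by decide
  have key : ∀ g : Fin N → Fin 2 → ℂ,
      ∑ f : Fin N → Fin 2, ∏ c, g c (f c) = ∏ c, ∑ j, g c j :=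
    fun g => (Fintype.prod_sum g).symm
  simp only [psi, T0]
  have step1 : ∀ U D : Fin N → Fin 2,
      (∑ H : Fin 2 × Fin N → Fin 2, ∏ v : Fin 2 × Fin N,
        ((if (if v.1 = 0 then U v.2 else D v.2) = b v then (1:ℂ) else 0) *
          (if (if v.1 = 0 then D v.2 else U v.2) = b v then 1 else 0))) =
      (Fintype.card (Fin 2 × Fin N → Fin 2) : ℂ) *
        ∏ v : Fin 2 × Fin N,
        ((if (if v.1 = 0 then U v.2 else D v.2) = b v then (1:ℂ) else 0) *
          (if (if v.1 = 0 then D v.2 else U v.2) = b v then 1 else 0)) := by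
    intro U D
    rw [Finset.sum_const, Finset.card_univ, nsmul_eq_mul]
  rw [Finset.sum_congr rfl fun U _ => Finset.sum_congr rfl fun D _ => step1 U D]
  simp only [← Finset.mul_sum]
  congr 1
  have step2 : ∀ U D : Fin N → Fin 2,
      (∏ v : Fin 2 × Fin N,
        ((if (if v.1 = 0 then U v.2 else D v.2) = b v then (1:ℂ) else 0) *
          (if (if v.1 = 0 then D v.2 else U v.2) = b v then 1 else 0))) =
      ∏ c : Fin N,
        (((if U c = b (0, c) then (1:ℂ) else 0) * (if D c = b (0, c) then 1 else 0)) *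
          ((if D c = b (1, c) then 1 else 0) * (if U c = b (1, c) then 1 else 0))) := by
    intro U D
    rw [Fintype.prod_prod_type, Fin.prod_univ_two, ← Finset.prod_mul_distrib]
    simp [h10]
  rw [Finset.sum_congr rfl fun U _ => Finset.sum_congr rfl fun D _ => step2 U D]
  have step3 : ∀ U : Fin N → Fin 2,
      (∑ D : Fin N → Fin 2, ∏ c : Fin N,
        (((if U c = b (0, c) then (1:ℂ) else 0) * (if D c = b (0, c) then 1 else 0)) *
          ((if D c = b (1, c) then 1 else 0) * (if U c = b (1, c) then 1 else 0)))) =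
      ∏ c : Fin N, ∑ d : Fin 2,
        (((if U c = b (0, c) then (1:ℂ) else 0) * (if d = b (0, c) then 1 else 0)) *
          ((if d = b (1, c) then 1 else 0) * (if U c = b (1, c) then 1 else 0))) :=
    fun U => key fun c d =>
      (((if U c = b (0, c) then (1:ℂ) else 0) * (if d = b (0, c) then 1 else 0)) *
        ((if d = b (1, c) then 1 else 0) * (if U c = b (1, c) then 1 else 0)))
  rw [Finset.sum_congr rfl fun U (_ : U ∈ Finset.univ) => step3 U]
  rw [key fun c u => ∑ d : Fin 2,
      (((if u = b (0, c) then (1:ℂ) else 0) * (if d = b (0, c) then 1 else 0)) *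
        ((if d = b (1, c) then 1 else 0) * (if u = b (1, c) then 1 else 0)))]
  refine Finset.prod_congr rfl fun c _ => ?_
  generalize b (0, c) = b0
  generalize b (1, c) = b1
  fin_cases b0 <;> fin_cases b1 <;> simp [Fin.sum_univ_two]

def swapRow (N : ℕ) : (Fin 2 × Fin N) ≃ (Fin 2 × Fin N) :=
  (Equiv.addRight (1 : Fin 2)).prodCongr (Equiv.refl _)

def esEquiv (N : ℕ) :
    {v : Fin 2 × Fin N // v ∉ Finset.univ.filter fun v => v.1 = 0} ≃
      {v : Fin 2 × Fin N // v ∈ Finset.univ.filter fun v => v.1 = 0} :=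
  (swapRow N).subtypeEquiv (fun v => by
    simp only [Finset.mem_filter, Finset.mem_univ, true_and, swapRow, Equiv.prodCongr_apply,
      Equiv.coe_addRight, Prod.map_fst]
    revert v
    exact fun v => (by decide : ∀ a : Fin 2, (¬ a = 0 ↔ a + 1 = 0)) v.1)

def eRow (N : ℕ) : Fin N ≃ {v : Fin 2 × Fin N // v ∉ Finset.univ.filter fun v => v.1 = 0} where
  toFun c := ⟨(1, c), by simp⟩
  invFun v := v.1.2
  left_inv c := rfl
  right_inv v := by
    rcases v with ⟨⟨r, c⟩, h⟩
    simp only [Finset.mem_filter, Finset.mem_univ, true_and] at h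
    have hr : r = 1 := Fin.eq_one_of_ne_zero r h
    subst hr; rfl

end Aux


section Aux2

set_option synthInstance.maxSize 4000

def ecEquiv (N : ℕ) :
    ({v : Fin 2 × Fin N // v ∉ Finset.univ.filter fun v => v.1 = 0} → Fin 2) ≃
      ({v : Fin 2 × Fin N // v ∈ Finset.univ.filter fun v => v.1 = 0} → Fin 2) :=
  (esEquiv N).arrowCongr (Equiv.refl (Fin 2))

noncomputable def Qmat (N : ℕ) (hN : 2 ≤ N)
    (T : Fin 2 × Fin N → (Fin 2 → Fin 2 → Fin 2 → Fin 2 → Fin 2 → ℂ)) :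
    Matrix ({v : Fin 2 × Fin N // v ∉ Finset.univ.filter fun v => v.1 = 0} → Fin 2)
      ({v : Fin 2 × Fin N // v ∉ Finset.univ.filter fun v => v.1 = 0} → Fin 2) ℂ :=
  (flat N (Finset.univ.filter fun v => v.1 = 0) (psi N hN T)).submatrix
    (Equiv.refl _) (ecEquiv N)

lemma card_mu (N : ℕ) :
    Fintype.card ({v : Fin 2 × Fin N // v ∉ Finset.univ.filter fun v => v.1 = 0} → Fin 2) =
      2 ^ N := by
  rw [Fintype.card_fun, ← Fintype.card_congr (eRow N), Fintype.card_fin, Fintype.card_fin]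

lemma key_iff (N : ℕ) (hN : 2 ≤ N)
    (T : Fin 2 × Fin N → (Fin 2 → Fin 2 → Fin 2 → Fin 2 → Fin 2 → ℂ)) :
    (flat N (Finset.univ.filter fun v => v.1 = 0) (psi N hN T)).rank = 2 ^ N ↔
      (Qmat N hN T).det ≠ 0 := by
  rw [← my_rank_submatrix (Equiv.refl _) (ecEquiv N)
    (flat N (Finset.univ.filter fun v => v.1 = 0) (psi N hN T)), ← card_mu N]
  exact my_rank_eq_card_iff _

lemma diff_det (N : ℕ) (hN : 2 ≤ N) :
    Differentiable ℂ (fun T : Fin 2 × Fin N → (Fin 2 → Fin 2 → Fin 2 → Fin 2 → Fin 2 → ℂ) =>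
      (Qmat N hN T).det) := by
  have hentry : ∀ p q, Differentiable ℂ
      (fun T : Fin 2 × Fin N → (Fin 2 → Fin 2 → Fin 2 → Fin 2 → Fin 2 → ℂ) =>
        Qmat N hN T p q) := by
    intro p q
    exact my_diff_psi hN _
  simp only [Matrix.det_apply']
  exact Differentiable.fun_sum fun σ _ =>
    Differentiable.const_mul (my_diff_prod _ _ fun k _ => hentry (σ k) k) _

lemma Q_T0 (N : ℕ) (hN : 2 ≤ N) :
    Qmat N hN (fun _ => T0) =
      (Fintype.card (Fin 2 × Fin N → Fin 2) : ℂ) • (1 : Matrix _ _ ℂ) := by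
  have h0 : ∀ c : Fin N,
      ((0 : Fin 2), c) ∈ Finset.univ.filter (fun v : Fin 2 × Fin N => v.1 = 0) := by
    intro c; simp
  have h1 : ∀ c : Fin N,
      ((1 : Fin 2), c) ∉ Finset.univ.filter (fun v : Fin 2 × Fin N => v.1 = 0) := by
    intro c
    simp only [Finset.mem_filter, Finset.mem_univ, true_and]
    exact (by decide : ¬ (1 : Fin 2) = 0)
  ext p q
  simp only [Qmat, Matrix.submatrix_apply, Equiv.coe_refl, id_eq, flat, Matrix.of_apply,
    Matrix.smul_apply, Matrix.one_apply, smul_eq_mul]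
  rw [my_psi_T0]
  congr 1
  have hper : ∀ c : Fin N,
      (if (if h : ((0 : Fin 2), c) ∈ Finset.univ.filter (fun v : Fin 2 × Fin N => v.1 = 0)
            then ecEquiv N q ⟨((0 : Fin 2), c), h⟩ else p ⟨((0 : Fin 2), c), h⟩) =
          (if h : ((1 : Fin 2), c) ∈ Finset.univ.filter (fun v : Fin 2 × Fin N => v.1 = 0)
            then ecEquiv N q ⟨((1 : Fin 2), c), h⟩ else p ⟨((1 : Fin 2), c), h⟩)
        then (1 : ℂ) else 0) =
      (if q (eRow N c) = p (eRow N c) then (1 : ℂ) else 0) := by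
    intro c
    rw [dif_pos (h0 c), dif_neg (h1 c)]
    have e0 : ecEquiv N q ⟨((0 : Fin 2), c), h0 c⟩ = q (eRow N c) := by
      simp only [ecEquiv, Equiv.arrowCongr_apply, Equiv.coe_refl, Function.comp_apply, id_eq]
      congr 1
    have e1 : p ⟨((1 : Fin 2), c), h1 c⟩ = p (eRow N c) := rfl
    rw [e0, e1]
  rw [Finset.prod_congr rfl fun c _ => hper c, Fintype.prod_boole]
  have hiff : (∀ c : Fin N, q (eRow N c) = p (eRow N c)) ↔ p = q := by
    constructor
    · intro h
      funext w
      have := h ((eRow N).symm w)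
      rw [Equiv.apply_symm_apply] at this
      exact this.symm
    · intro h c; rw [h]
  simp only [hiff]

lemma det_T0_ne (N : ℕ) (hN : 2 ≤ N) : (Qmat N hN (fun _ => T0)).det ≠ 0 := by
  rw [Q_T0 N hN, Matrix.det_smul, Matrix.det_one, card_mu N, mul_one]
  exact pow_ne_zero _ (Nat.cast_ne_zero.mpr Fintype.card_ne_zero)

end Aux2

set_option synthInstance.maxSize 4000

/-- The set of tuples `(T_v)_v ∈ (ℂ² ⊗ (ℂ²)^{⊗4})^{2N}` for which the row flattening of the
torus contraction `ψ((T_v)_v) ∈ (ℂ²)^{⊗2N}` — the `S`-flattening where `S` consists of the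
physical factors at the `N` top-row vertices — has full rank `2^N` is open and dense (in the
Euclidean topology) in the parameter space `(ℂ² ⊗ (ℂ²)^{⊗4})^{2N}`. -/
theorem stmt7 (N : ℕ) (hN : 2 ≤ N) (hNeven : Even N) :
    IsOpen {T : Fin 2 × Fin N → (Fin 2 → Fin 2 → Fin 2 → Fin 2 → Fin 2 → ℂ) |
        (flat N (Finset.univ.filter fun v => v.1 = 0) (psi N hN T)).rank = 2 ^ N} ∧
      Dense {T : Fin 2 × Fin N → (Fin 2 → Fin 2 → Fin 2 → Fin 2 → Fin 2 → ℂ) |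
        (flat N (Finset.univ.filter fun v => v.1 = 0) (psi N hN T)).rank = 2 ^ N} := by
  have hset : {T : Fin 2 × Fin N → (Fin 2 → Fin 2 → Fin 2 → Fin 2 → Fin 2 → ℂ) |
      (flat N (Finset.univ.filter fun v => v.1 = 0) (psi N hN T)).rank = 2 ^ N} =
      {T | (Qmat N hN T).det ≠ 0} := Set.ext fun T => key_iff N hN T
  rw [hset]
  constructor
  · exact isOpen_compl_singleton.preimage (diff_det N hN).continuous
  · intro T
    let ℓ : ℂ → (Fin 2 × Fin N → (Fin 2 → Fin 2 → Fin 2 → Fin 2 → Fin 2 → ℂ)) :=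
      fun z => T + z • ((fun _ => T0) - T)
    have hldiff : Differentiable ℂ ℓ :=
      Differentiable.const_add T (differentiable_id.fun_smul (differentiable_const _))
    have hg : Differentiable ℂ (fun z => (Qmat N hN (ℓ z)).det) := (diff_det N hN).comp hldiff
    have hg1 : (Qmat N hN (ℓ 1)).det ≠ 0 := by
      have h1 : ℓ 1 = fun _ => T0 := by
        simp only [ℓ, one_smul, add_sub_cancel]
      rw [h1]
      exact det_T0_ne N hN
    have h0 : ℓ 0 = T := by simp only [ℓ, zero_smul, add_zero]
    rcases ((hg.analyticAt 0).eventually_eq_zero_or_eventually_ne_zero) with h | h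
    · exfalso
      have hz : (fun z => (Qmat N hN (ℓ z)).det) =ᶠ[nhds (0 : ℂ)] 0 := h.mono fun z hz => hz
      have := AnalyticOnNhd.eqOn_zero_of_preconnected_of_eventuallyEq_zero
        (fun z _ => hg.analyticAt z) isPreconnected_univ (Set.mem_univ (0 : ℂ)) hz
      exact hg1 (this (Set.mem_univ (1 : ℂ)))
    · have htend : Filter.Tendsto ℓ (nhdsWithin 0 {(0 : ℂ)}ᶜ) (nhds T) := by
        have := hldiff.continuous.tendsto 0
        rw [h0] at this
        exact this.mono_left nhdsWithin_le_nhds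
      exact mem_closure_of_frequently_of_tendsto
        (h.frequently.mono fun z hz => hz) htend
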